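/- arXiv:2210.11500 — 2 statements merged into one kernel-verified Lean document; each statement's English description precedes it below -/
import Mathlib

section
/- Let E be a real inner product space. For each ordered pair (i,j) of distinct indices in {1,2,3,4}, let ν(i,j) ∈ E be a unit vector with ν(i,j) = ν(j,i), let s(i,j) ∈ {-1,1}, and let f(i,j) ∈ ℝ with f(i,j) = f(j,i). Assume: (a) for each k, Σ_{i ≠ k} s(i,k)·ν(i,k) = 0; (b) ⟪ν(i,j), ν(k,l)⟫ = 0 whenever {i,j} and {k,l} are disjoint; (c) for each k, the compatibility condition Σ_{i ≠ k} s(i,k)·f(i,k) = 0 holds. Then the vector V := (1/2)·Σ_{1 ≤ i < j ≤ 4} f(i,j)·ν(i,j) satisfies ⟪V, ν(k,l)⟫ = f(k,l) for every pair of distinct indices k, l. -/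
open scoped RealInnerProductSpace

theorem key_inner
    {E : Type*} [NormedAddCommGroup E] [InnerProductSpace ℝ E]
    (ν : Fin 4 → Fin 4 → E) (s : Fin 4 → Fin 4 → ℝ)
    (hνsymm : ∀ i j, ν i j = ν j i)
    (hνunit : ∀ i j, i ≠ j → ‖ν i j‖ = 1)
    (hs : ∀ i j, s i j = 1 ∨ s i j = -1)
    (ha : ∀ k, ∑ i ∈ Finset.univ.erase k, s i k • ν i k = 0)
    (a b c d : Fin 4) (hab : a ≠ b) (hac : a ≠ c) (had : a ≠ d)
    (hbc : b ≠ c) (hbd : b ≠ d) (hcd : c ≠ d) :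
    ⟪ν a b, ν a c⟫ = -(1/2) * (s b a * s c a) := by
  have hsq : ∀ i j, s i j * s i j = 1 := by
    intro i j; rcases hs i j with h | h <;> rw [h] <;> norm_num
  have hset : Finset.univ.erase a = ({b, c, d} : Finset (Fin 4)) := by
    ext x
    simp only [Finset.mem_erase, Finset.mem_univ, and_true, Finset.mem_insert,
      Finset.mem_singleton, ne_eq, Fin.ext_iff] at *
    have h1 := a.isLt; have h2 := b.isLt; have h3 := c.isLt; have h4 := d.isLt
    have h5 := x.isLt
    omega
  have hsum := ha a
  rw [hset] at hsum
  rw [Finset.sum_insert (by simp [hbc, hbd]), Finset.sum_insert (by simp [hcd]),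
    Finset.sum_singleton] at hsum
  rw [hνsymm b a, hνsymm c a, hνsymm d a] at hsum
  have hunit : ∀ j, a ≠ j → ⟪ν a j, ν a j⟫ = (1:ℝ) := by
    intro j hj
    rw [real_inner_self_eq_norm_mul_norm, hνunit a j hj]; norm_num
  have hE : ∀ w : E, ⟪s b a • ν a b + (s c a • ν a c + s d a • ν a d), w⟫ = (0:ℝ) := by
    intro w; rw [hsum, inner_zero_left]
  have hE1 := hE (ν a b)
  have hE2 := hE (ν a c)
  have hE3 := hE (ν a d)
  simp only [inner_add_left, real_inner_smul_left] at hE1 hE2 hE3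
  rw [hunit b hab] at hE1
  rw [hunit c hac] at hE2
  rw [hunit d had] at hE3
  have hcm : (⟪ν a b, ν a c⟫ : ℝ) = ⟪ν a c, ν a b⟫ := real_inner_comm _ _
  have hcm2 : (⟪ν a b, ν a d⟫ : ℝ) = ⟪ν a d, ν a b⟫ := real_inner_comm _ _
  have hcm3 : (⟪ν a c, ν a d⟫ : ℝ) = ⟪ν a d, ν a c⟫ := real_inner_comm _ _
  rw [← hcm, ← hcm2] at hE1
  rw [← hcm3] at hE2
  set x := ⟪ν a b, ν a c⟫ with hx
  set y := ⟪ν a b, ν a d⟫ with hy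
  set z := ⟪ν a c, ν a d⟫ with hz
  have hp := hsq b a; have hq := hsq c a; have hr := hsq d a
  have h4 : 2 * (s b a * s c a) * x + 1 = 0 := by
    linear_combination s b a * hE1 + s c a * hE2 - s d a * hE3 - hp - hq + hr
  linear_combination (s b a * s c a / 2) * h4 - x * (s c a * s c a) * hp - x * hq

/-- Pointwise construction at a T-type singular point: six sheets indexed by unordered
pairs from `{1,2,3,4}` with unit normals `ν i j = ν j i` and sign functions
`s i j ∈ {±1}` satisfying, along each edge `k`, `∑_{i ≠ k} s i k • ν i k = 0`;
normals of sheets with disjoint index pairs are orthogonal. If the values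
`f i j = f j i` satisfy the compatibility condition `∑_{i ≠ k} s i k * f i k = 0` for
each `k`, then `V = (1/2) ∑_{i < j} f i j • ν i j` satisfies `⟪V, ν k l⟫ = f k l`. -/
theorem t_point_compatible_realization
    {E : Type*} [NormedAddCommGroup E] [InnerProductSpace ℝ E]
    (ν : Fin 4 → Fin 4 → E) (s : Fin 4 → Fin 4 → ℝ) (f : Fin 4 → Fin 4 → ℝ)
    (hνsymm : ∀ i j, ν i j = ν j i)
    (hνunit : ∀ i j, i ≠ j → ‖ν i j‖ = 1)
    (hs : ∀ i j, s i j = 1 ∨ s i j = -1)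
    (hfsymm : ∀ i j, f i j = f j i)
    (ha : ∀ k, ∑ i ∈ Finset.univ.erase k, s i k • ν i k = 0)
    (hb : ∀ i j k l : Fin 4, i ≠ j → k ≠ l → i ≠ k → i ≠ l → j ≠ k → j ≠ l →
      ⟪ν i j, ν k l⟫ = 0)
    (hc : ∀ k, ∑ i ∈ Finset.univ.erase k, s i k * f i k = 0) :
    ∀ k l, k ≠ l →
      ⟪(1/2 : ℝ) • ∑ i, ∑ j ∈ Finset.Ioi i, f i j • ν i j, ν k l⟫ = f k l := by
  have hsq : ∀ i j, s i j * s i j = 1 := by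
    intro i j; rcases hs i j with h | h <;> rw [h] <;> norm_num
  have hone : ∀ i j, i ≠ j → ⟪ν i j, ν i j⟫ = (1:ℝ) := by
    intro i j hij
    rw [real_inner_self_eq_norm_mul_norm, hνunit i j hij]; norm_num
  have hexp : (∑ i, ∑ j ∈ Finset.Ioi i, f i j • ν i j)
      = f 0 1 • ν 0 1 + f 0 2 • ν 0 2 + f 0 3 • ν 0 3 + f 1 2 • ν 1 2
        + f 1 3 • ν 1 3 + f 2 3 • ν 2 3 := by
    rw [Fin.sum_univ_four,
      show Finset.Ioi (0 : Fin 4) = {1, 2, 3} from by decide,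
      show Finset.Ioi (1 : Fin 4) = {2, 3} from by decide,
      show Finset.Ioi (2 : Fin 4) = {3} from by decide,
      show Finset.Ioi (3 : Fin 4) = (∅ : Finset (Fin 4)) from by decide,
      Finset.sum_insert (by decide), Finset.sum_insert (by decide),
      Finset.sum_singleton, Finset.sum_insert (by decide), Finset.sum_singleton,
      Finset.sum_singleton, Finset.sum_empty]
    abel
  have hIP : ∀ w : E, ⟪(1/2 : ℝ) • ∑ i, ∑ j ∈ Finset.Ioi i, f i j • ν i j, w⟫
      = 1/2 * (f 0 1 * ⟪ν 0 1, w⟫ + f 0 2 * ⟪ν 0 2, w⟫ + f 0 3 * ⟪ν 0 3, w⟫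
        + f 1 2 * ⟪ν 1 2, w⟫ + f 1 3 * ⟪ν 1 3, w⟫ + f 2 3 * ⟪ν 2 3, w⟫) := by
    intro w
    rw [hexp]
    simp only [inner_add_left, real_inner_smul_left]
    try ring
  have hc0 : s 1 0 * f 0 1 + (s 2 0 * f 0 2 + s 3 0 * f 0 3) = 0 := by
    have h := hc 0
    rw [show Finset.univ.erase (0 : Fin 4) = {1, 2, 3} from by decide,
      Finset.sum_insert (by decide), Finset.sum_insert (by decide),
      Finset.sum_singleton, hfsymm 1 0, hfsymm 2 0, hfsymm 3 0] at h
    exact h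
  have hc1 : s 0 1 * f 0 1 + (s 2 1 * f 1 2 + s 3 1 * f 1 3) = 0 := by
    have h := hc 1
    rw [show Finset.univ.erase (1 : Fin 4) = {0, 2, 3} from by decide,
      Finset.sum_insert (by decide), Finset.sum_insert (by decide),
      Finset.sum_singleton, hfsymm 2 1, hfsymm 3 1] at h
    exact h
  have hc2 : s 0 2 * f 0 2 + (s 1 2 * f 1 2 + s 3 2 * f 2 3) = 0 := by
    have h := hc 2
    rw [show Finset.univ.erase (2 : Fin 4) = {0, 1, 3} from by decide,
      Finset.sum_insert (by decide), Finset.sum_insert (by decide),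
      Finset.sum_singleton, hfsymm 3 2] at h
    exact h
  have hc3 : s 0 3 * f 0 3 + (s 1 3 * f 1 3 + s 2 3 * f 2 3) = 0 := by
    have h := hc 3
    rw [show Finset.univ.erase (3 : Fin 4) = {0, 1, 2} from by decide,
      Finset.sum_insert (by decide), Finset.sum_insert (by decide),
      Finset.sum_singleton] at h
    exact h
  intro k l hkl
  fin_cases k <;> fin_cases l
  · exact absurd rfl hkl
  · -- case k=0, l=1
    show ⟪(1/2 : ℝ) • ∑ i, ∑ j ∈ Finset.Ioi i, f i j • ν i j, ν 0 1⟫ = f 0 1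
    have hv0 : ⟪ν 0 1, ν 0 1⟫ = (1:ℝ) := hone 0 1 (by decide)
    have hv1 : ⟪ν 0 2, ν 0 1⟫ = -(1/2) * (s 2 0 * s 1 0) := by
      exact key_inner ν s hνsymm hνunit hs ha 0 2 1 3 (by decide) (by decide) (by decide) (by decide) (by decide) (by decide)
    have hv2 : ⟪ν 0 3, ν 0 1⟫ = -(1/2) * (s 3 0 * s 1 0) := by
      exact key_inner ν s hνsymm hνunit hs ha 0 3 1 2 (by decide) (by decide) (by decide) (by decide) (by decide) (by decide)
    have hv3 : ⟪ν 1 2, ν 0 1⟫ = -(1/2) * (s 2 1 * s 0 1) := by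
      rw [hνsymm 0 1]; exact key_inner ν s hνsymm hνunit hs ha 1 2 0 3 (by decide) (by decide) (by decide) (by decide) (by decide) (by decide)
    have hv4 : ⟪ν 1 3, ν 0 1⟫ = -(1/2) * (s 3 1 * s 0 1) := by
      rw [hνsymm 0 1]; exact key_inner ν s hνsymm hνunit hs ha 1 3 0 2 (by decide) (by decide) (by decide) (by decide) (by decide) (by decide)
    have hv5 : ⟪ν 2 3, ν 0 1⟫ = (0:ℝ) := hb 2 3 0 1 (by decide) (by decide) (by decide) (by decide) (by decide) (by decide)
    rw [hIP, hv0, hv1, hv2, hv3, hv4, hv5]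
    linear_combination (-(1/4) * s 1 0) * hc0 + (-(1/4) * s 0 1) * hc1 + (1/4) * (f 0 1) * hsq 1 0 + (1/4) * (f 0 1) * hsq 0 1
  · -- case k=0, l=2
    show ⟪(1/2 : ℝ) • ∑ i, ∑ j ∈ Finset.Ioi i, f i j • ν i j, ν 0 2⟫ = f 0 2
    have hv0 : ⟪ν 0 1, ν 0 2⟫ = -(1/2) * (s 1 0 * s 2 0) := by
      exact key_inner ν s hνsymm hνunit hs ha 0 1 2 3 (by decide) (by decide) (by decide) (by decide) (by decide) (by decide)
    have hv1 : ⟪ν 0 2, ν 0 2⟫ = (1:ℝ) := hone 0 2 (by decide)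
    have hv2 : ⟪ν 0 3, ν 0 2⟫ = -(1/2) * (s 3 0 * s 2 0) := by
      exact key_inner ν s hνsymm hνunit hs ha 0 3 2 1 (by decide) (by decide) (by decide) (by decide) (by decide) (by decide)
    have hv3 : ⟪ν 1 2, ν 0 2⟫ = -(1/2) * (s 1 2 * s 0 2) := by
      rw [hνsymm 1 2, hνsymm 0 2]; exact key_inner ν s hνsymm hνunit hs ha 2 1 0 3 (by decide) (by decide) (by decide) (by decide) (by decide) (by decide)
    have hv4 : ⟪ν 1 3, ν 0 2⟫ = (0:ℝ) := hb 1 3 0 2 (by decide) (by decide) (by decide) (by decide) (by decide) (by decide)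
    have hv5 : ⟪ν 2 3, ν 0 2⟫ = -(1/2) * (s 3 2 * s 0 2) := by
      rw [hνsymm 0 2]; exact key_inner ν s hνsymm hνunit hs ha 2 3 0 1 (by decide) (by decide) (by decide) (by decide) (by decide) (by decide)
    rw [hIP, hv0, hv1, hv2, hv3, hv4, hv5]
    linear_combination (-(1/4) * s 2 0) * hc0 + (-(1/4) * s 0 2) * hc2 + (1/4) * (f 0 2) * hsq 2 0 + (1/4) * (f 0 2) * hsq 0 2
  · -- case k=0, l=3
    show ⟪(1/2 : ℝ) • ∑ i, ∑ j ∈ Finset.Ioi i, f i j • ν i j, ν 0 3⟫ = f 0 3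
    have hv0 : ⟪ν 0 1, ν 0 3⟫ = -(1/2) * (s 1 0 * s 3 0) := by
      exact key_inner ν s hνsymm hνunit hs ha 0 1 3 2 (by decide) (by decide) (by decide) (by decide) (by decide) (by decide)
    have hv1 : ⟪ν 0 2, ν 0 3⟫ = -(1/2) * (s 2 0 * s 3 0) := by
      exact key_inner ν s hνsymm hνunit hs ha 0 2 3 1 (by decide) (by decide) (by decide) (by decide) (by decide) (by decide)
    have hv2 : ⟪ν 0 3, ν 0 3⟫ = (1:ℝ) := hone 0 3 (by decide)
    have hv3 : ⟪ν 1 2, ν 0 3⟫ = (0:ℝ) := hb 1 2 0 3 (by decide) (by decide) (by decide) (by decide) (by decide) (by decide)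
    have hv4 : ⟪ν 1 3, ν 0 3⟫ = -(1/2) * (s 1 3 * s 0 3) := by
      rw [hνsymm 1 3, hνsymm 0 3]; exact key_inner ν s hνsymm hνunit hs ha 3 1 0 2 (by decide) (by decide) (by decide) (by decide) (by decide) (by decide)
    have hv5 : ⟪ν 2 3, ν 0 3⟫ = -(1/2) * (s 2 3 * s 0 3) := by
      rw [hνsymm 2 3, hνsymm 0 3]; exact key_inner ν s hνsymm hνunit hs ha 3 2 0 1 (by decide) (by decide) (by decide) (by decide) (by decide) (by decide)
    rw [hIP, hv0, hv1, hv2, hv3, hv4, hv5]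
    linear_combination (-(1/4) * s 3 0) * hc0 + (-(1/4) * s 0 3) * hc3 + (1/4) * (f 0 3) * hsq 3 0 + (1/4) * (f 0 3) * hsq 0 3
  · -- case k=1, l=0
    show ⟪(1/2 : ℝ) • ∑ i, ∑ j ∈ Finset.Ioi i, f i j • ν i j, ν 1 0⟫ = f 1 0
    have hv0 : ⟪ν 0 1, ν 1 0⟫ = (1:ℝ) := by
      rw [hνsymm 1 0]; exact hone 0 1 (by decide)
    have hv1 : ⟪ν 0 2, ν 1 0⟫ = -(1/2) * (s 2 0 * s 1 0) := by
      rw [hνsymm 1 0]; exact key_inner ν s hνsymm hνunit hs ha 0 2 1 3 (by decide) (by decide) (by decide) (by decide) (by decide) (by decide)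
    have hv2 : ⟪ν 0 3, ν 1 0⟫ = -(1/2) * (s 3 0 * s 1 0) := by
      rw [hνsymm 1 0]; exact key_inner ν s hνsymm hνunit hs ha 0 3 1 2 (by decide) (by decide) (by decide) (by decide) (by decide) (by decide)
    have hv3 : ⟪ν 1 2, ν 1 0⟫ = -(1/2) * (s 2 1 * s 0 1) := by
      exact key_inner ν s hνsymm hνunit hs ha 1 2 0 3 (by decide) (by decide) (by decide) (by decide) (by decide) (by decide)
    have hv4 : ⟪ν 1 3, ν 1 0⟫ = -(1/2) * (s 3 1 * s 0 1) := by
      exact key_inner ν s hνsymm hνunit hs ha 1 3 0 2 (by decide) (by decide) (by decide) (by decide) (by decide) (by decide)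
    have hv5 : ⟪ν 2 3, ν 1 0⟫ = (0:ℝ) := hb 2 3 1 0 (by decide) (by decide) (by decide) (by decide) (by decide) (by decide)
    rw [hIP, hv0, hv1, hv2, hv3, hv4, hv5]
    linear_combination (-(1/4) * s 0 1) * hc1 + (-(1/4) * s 1 0) * hc0 + (1/4) * (f 0 1) * hsq 0 1 + (1/4) * (f 0 1) * hsq 1 0 - hfsymm 1 0
  · exact absurd rfl hkl
  · -- case k=1, l=2
    show ⟪(1/2 : ℝ) • ∑ i, ∑ j ∈ Finset.Ioi i, f i j • ν i j, ν 1 2⟫ = f 1 2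
    have hv0 : ⟪ν 0 1, ν 1 2⟫ = -(1/2) * (s 0 1 * s 2 1) := by
      rw [hνsymm 0 1]; exact key_inner ν s hνsymm hνunit hs ha 1 0 2 3 (by decide) (by decide) (by decide) (by decide) (by decide) (by decide)
    have hv1 : ⟪ν 0 2, ν 1 2⟫ = -(1/2) * (s 0 2 * s 1 2) := by
      rw [hνsymm 0 2, hνsymm 1 2]; exact key_inner ν s hνsymm hνunit hs ha 2 0 1 3 (by decide) (by decide) (by decide) (by decide) (by decide) (by decide)
    have hv2 : ⟪ν 0 3, ν 1 2⟫ = (0:ℝ) := hb 0 3 1 2 (by decide) (by decide) (by decide) (by decide) (by decide) (by decide)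
    have hv3 : ⟪ν 1 2, ν 1 2⟫ = (1:ℝ) := hone 1 2 (by decide)
    have hv4 : ⟪ν 1 3, ν 1 2⟫ = -(1/2) * (s 3 1 * s 2 1) := by
      exact key_inner ν s hνsymm hνunit hs ha 1 3 2 0 (by decide) (by decide) (by decide) (by decide) (by decide) (by decide)
    have hv5 : ⟪ν 2 3, ν 1 2⟫ = -(1/2) * (s 3 2 * s 1 2) := by
      rw [hνsymm 1 2]; exact key_inner ν s hνsymm hνunit hs ha 2 3 1 0 (by decide) (by decide) (by decide) (by decide) (by decide) (by decide)
    rw [hIP, hv0, hv1, hv2, hv3, hv4, hv5]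
    linear_combination (-(1/4) * s 2 1) * hc1 + (-(1/4) * s 1 2) * hc2 + (1/4) * (f 1 2) * hsq 2 1 + (1/4) * (f 1 2) * hsq 1 2
  · -- case k=1, l=3
    show ⟪(1/2 : ℝ) • ∑ i, ∑ j ∈ Finset.Ioi i, f i j • ν i j, ν 1 3⟫ = f 1 3
    have hv0 : ⟪ν 0 1, ν 1 3⟫ = -(1/2) * (s 0 1 * s 3 1) := by
      rw [hνsymm 0 1]; exact key_inner ν s hνsymm hνunit hs ha 1 0 3 2 (by decide) (by decide) (by decide) (by decide) (by decide) (by decide)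
    have hv1 : ⟪ν 0 2, ν 1 3⟫ = (0:ℝ) := hb 0 2 1 3 (by decide) (by decide) (by decide) (by decide) (by decide) (by decide)
    have hv2 : ⟪ν 0 3, ν 1 3⟫ = -(1/2) * (s 0 3 * s 1 3) := by
      rw [hνsymm 0 3, hνsymm 1 3]; exact key_inner ν s hνsymm hνunit hs ha 3 0 1 2 (by decide) (by decide) (by decide) (by decide) (by decide) (by decide)
    have hv3 : ⟪ν 1 2, ν 1 3⟫ = -(1/2) * (s 2 1 * s 3 1) := by
      exact key_inner ν s hνsymm hνunit hs ha 1 2 3 0 (by decide) (by decide) (by decide) (by decide) (by decide) (by decide)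
    have hv4 : ⟪ν 1 3, ν 1 3⟫ = (1:ℝ) := hone 1 3 (by decide)
    have hv5 : ⟪ν 2 3, ν 1 3⟫ = -(1/2) * (s 2 3 * s 1 3) := by
      rw [hνsymm 2 3, hνsymm 1 3]; exact key_inner ν s hνsymm hνunit hs ha 3 2 1 0 (by decide) (by decide) (by decide) (by decide) (by decide) (by decide)
    rw [hIP, hv0, hv1, hv2, hv3, hv4, hv5]
    linear_combination (-(1/4) * s 3 1) * hc1 + (-(1/4) * s 1 3) * hc3 + (1/4) * (f 1 3) * hsq 3 1 + (1/4) * (f 1 3) * hsq 1 3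
  · -- case k=2, l=0
    show ⟪(1/2 : ℝ) • ∑ i, ∑ j ∈ Finset.Ioi i, f i j • ν i j, ν 2 0⟫ = f 2 0
    have hv0 : ⟪ν 0 1, ν 2 0⟫ = -(1/2) * (s 1 0 * s 2 0) := by
      rw [hνsymm 2 0]; exact key_inner ν s hνsymm hνunit hs ha 0 1 2 3 (by decide) (by decide) (by decide) (by decide) (by decide) (by decide)
    have hv1 : ⟪ν 0 2, ν 2 0⟫ = (1:ℝ) := by
      rw [hνsymm 2 0]; exact hone 0 2 (by decide)
    have hv2 : ⟪ν 0 3, ν 2 0⟫ = -(1/2) * (s 3 0 * s 2 0) := by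
      rw [hνsymm 2 0]; exact key_inner ν s hνsymm hνunit hs ha 0 3 2 1 (by decide) (by decide) (by decide) (by decide) (by decide) (by decide)
    have hv3 : ⟪ν 1 2, ν 2 0⟫ = -(1/2) * (s 1 2 * s 0 2) := by
      rw [hνsymm 1 2]; exact key_inner ν s hνsymm hνunit hs ha 2 1 0 3 (by decide) (by decide) (by decide) (by decide) (by decide) (by decide)
    have hv4 : ⟪ν 1 3, ν 2 0⟫ = (0:ℝ) := hb 1 3 2 0 (by decide) (by decide) (by decide) (by decide) (by decide) (by decide)
    have hv5 : ⟪ν 2 3, ν 2 0⟫ = -(1/2) * (s 3 2 * s 0 2) := by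
      exact key_inner ν s hνsymm hνunit hs ha 2 3 0 1 (by decide) (by decide) (by decide) (by decide) (by decide) (by decide)
    rw [hIP, hv0, hv1, hv2, hv3, hv4, hv5]
    linear_combination (-(1/4) * s 0 2) * hc2 + (-(1/4) * s 2 0) * hc0 + (1/4) * (f 0 2) * hsq 0 2 + (1/4) * (f 0 2) * hsq 2 0 - hfsymm 2 0
  · -- case k=2, l=1
    show ⟪(1/2 : ℝ) • ∑ i, ∑ j ∈ Finset.Ioi i, f i j • ν i j, ν 2 1⟫ = f 2 1
    have hv0 : ⟪ν 0 1, ν 2 1⟫ = -(1/2) * (s 0 1 * s 2 1) := by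
      rw [hνsymm 0 1, hνsymm 2 1]; exact key_inner ν s hνsymm hνunit hs ha 1 0 2 3 (by decide) (by decide) (by decide) (by decide) (by decide) (by decide)
    have hv1 : ⟪ν 0 2, ν 2 1⟫ = -(1/2) * (s 0 2 * s 1 2) := by
      rw [hνsymm 0 2]; exact key_inner ν s hνsymm hνunit hs ha 2 0 1 3 (by decide) (by decide) (by decide) (by decide) (by decide) (by decide)
    have hv2 : ⟪ν 0 3, ν 2 1⟫ = (0:ℝ) := hb 0 3 2 1 (by decide) (by decide) (by decide) (by decide) (by decide) (by decide)
    have hv3 : ⟪ν 1 2, ν 2 1⟫ = (1:ℝ) := by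
      rw [hνsymm 2 1]; exact hone 1 2 (by decide)
    have hv4 : ⟪ν 1 3, ν 2 1⟫ = -(1/2) * (s 3 1 * s 2 1) := by
      rw [hνsymm 2 1]; exact key_inner ν s hνsymm hνunit hs ha 1 3 2 0 (by decide) (by decide) (by decide) (by decide) (by decide) (by decide)
    have hv5 : ⟪ν 2 3, ν 2 1⟫ = -(1/2) * (s 3 2 * s 1 2) := by
      exact key_inner ν s hνsymm hνunit hs ha 2 3 1 0 (by decide) (by decide) (by decide) (by decide) (by decide) (by decide)
    rw [hIP, hv0, hv1, hv2, hv3, hv4, hv5]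
    linear_combination (-(1/4) * s 1 2) * hc2 + (-(1/4) * s 2 1) * hc1 + (1/4) * (f 1 2) * hsq 1 2 + (1/4) * (f 1 2) * hsq 2 1 - hfsymm 2 1
  · exact absurd rfl hkl
  · -- case k=2, l=3
    show ⟪(1/2 : ℝ) • ∑ i, ∑ j ∈ Finset.Ioi i, f i j • ν i j, ν 2 3⟫ = f 2 3
    have hv0 : ⟪ν 0 1, ν 2 3⟫ = (0:ℝ) := hb 0 1 2 3 (by decide) (by decide) (by decide) (by decide) (by decide) (by decide)
    have hv1 : ⟪ν 0 2, ν 2 3⟫ = -(1/2) * (s 0 2 * s 3 2) := by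
      rw [hνsymm 0 2]; exact key_inner ν s hνsymm hνunit hs ha 2 0 3 1 (by decide) (by decide) (by decide) (by decide) (by decide) (by decide)
    have hv2 : ⟪ν 0 3, ν 2 3⟫ = -(1/2) * (s 0 3 * s 2 3) := by
      rw [hνsymm 0 3, hνsymm 2 3]; exact key_inner ν s hνsymm hνunit hs ha 3 0 2 1 (by decide) (by decide) (by decide) (by decide) (by decide) (by decide)
    have hv3 : ⟪ν 1 2, ν 2 3⟫ = -(1/2) * (s 1 2 * s 3 2) := by
      rw [hνsymm 1 2]; exact key_inner ν s hνsymm hνunit hs ha 2 1 3 0 (by decide) (by decide) (by decide) (by decide) (by decide) (by decide)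
    have hv4 : ⟪ν 1 3, ν 2 3⟫ = -(1/2) * (s 1 3 * s 2 3) := by
      rw [hνsymm 1 3, hνsymm 2 3]; exact key_inner ν s hνsymm hνunit hs ha 3 1 2 0 (by decide) (by decide) (by decide) (by decide) (by decide) (by decide)
    have hv5 : ⟪ν 2 3, ν 2 3⟫ = (1:ℝ) := hone 2 3 (by decide)
    rw [hIP, hv0, hv1, hv2, hv3, hv4, hv5]
    linear_combination (-(1/4) * s 3 2) * hc2 + (-(1/4) * s 2 3) * hc3 + (1/4) * (f 2 3) * hsq 3 2 + (1/4) * (f 2 3) * hsq 2 3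
  · -- case k=3, l=0
    show ⟪(1/2 : ℝ) • ∑ i, ∑ j ∈ Finset.Ioi i, f i j • ν i j, ν 3 0⟫ = f 3 0
    have hv0 : ⟪ν 0 1, ν 3 0⟫ = -(1/2) * (s 1 0 * s 3 0) := by
      rw [hνsymm 3 0]; exact key_inner ν s hνsymm hνunit hs ha 0 1 3 2 (by decide) (by decide) (by decide) (by decide) (by decide) (by decide)
    have hv1 : ⟪ν 0 2, ν 3 0⟫ = -(1/2) * (s 2 0 * s 3 0) := by
      rw [hνsymm 3 0]; exact key_inner ν s hνsymm hνunit hs ha 0 2 3 1 (by decide) (by decide) (by decide) (by decide) (by decide) (by decide)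
    have hv2 : ⟪ν 0 3, ν 3 0⟫ = (1:ℝ) := by
      rw [hνsymm 3 0]; exact hone 0 3 (by decide)
    have hv3 : ⟪ν 1 2, ν 3 0⟫ = (0:ℝ) := hb 1 2 3 0 (by decide) (by decide) (by decide) (by decide) (by decide) (by decide)
    have hv4 : ⟪ν 1 3, ν 3 0⟫ = -(1/2) * (s 1 3 * s 0 3) := by
      rw [hνsymm 1 3]; exact key_inner ν s hνsymm hνunit hs ha 3 1 0 2 (by decide) (by decide) (by decide) (by decide) (by decide) (by decide)
    have hv5 : ⟪ν 2 3, ν 3 0⟫ = -(1/2) * (s 2 3 * s 0 3) := by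
      rw [hνsymm 2 3]; exact key_inner ν s hνsymm hνunit hs ha 3 2 0 1 (by decide) (by decide) (by decide) (by decide) (by decide) (by decide)
    rw [hIP, hv0, hv1, hv2, hv3, hv4, hv5]
    linear_combination (-(1/4) * s 0 3) * hc3 + (-(1/4) * s 3 0) * hc0 + (1/4) * (f 0 3) * hsq 0 3 + (1/4) * (f 0 3) * hsq 3 0 - hfsymm 3 0
  · -- case k=3, l=1
    show ⟪(1/2 : ℝ) • ∑ i, ∑ j ∈ Finset.Ioi i, f i j • ν i j, ν 3 1⟫ = f 3 1
    have hv0 : ⟪ν 0 1, ν 3 1⟫ = -(1/2) * (s 0 1 * s 3 1) := by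
      rw [hνsymm 0 1, hνsymm 3 1]; exact key_inner ν s hνsymm hνunit hs ha 1 0 3 2 (by decide) (by decide) (by decide) (by decide) (by decide) (by decide)
    have hv1 : ⟪ν 0 2, ν 3 1⟫ = (0:ℝ) := hb 0 2 3 1 (by decide) (by decide) (by decide) (by decide) (by decide) (by decide)
    have hv2 : ⟪ν 0 3, ν 3 1⟫ = -(1/2) * (s 0 3 * s 1 3) := by
      rw [hνsymm 0 3]; exact key_inner ν s hνsymm hνunit hs ha 3 0 1 2 (by decide) (by decide) (by decide) (by decide) (by decide) (by decide)
    have hv3 : ⟪ν 1 2, ν 3 1⟫ = -(1/2) * (s 2 1 * s 3 1) := by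
      rw [hνsymm 3 1]; exact key_inner ν s hνsymm hνunit hs ha 1 2 3 0 (by decide) (by decide) (by decide) (by decide) (by decide) (by decide)
    have hv4 : ⟪ν 1 3, ν 3 1⟫ = (1:ℝ) := by
      rw [hνsymm 3 1]; exact hone 1 3 (by decide)
    have hv5 : ⟪ν 2 3, ν 3 1⟫ = -(1/2) * (s 2 3 * s 1 3) := by
      rw [hνsymm 2 3]; exact key_inner ν s hνsymm hνunit hs ha 3 2 1 0 (by decide) (by decide) (by decide) (by decide) (by decide) (by decide)
    rw [hIP, hv0, hv1, hv2, hv3, hv4, hv5]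
    linear_combination (-(1/4) * s 1 3) * hc3 + (-(1/4) * s 3 1) * hc1 + (1/4) * (f 1 3) * hsq 1 3 + (1/4) * (f 1 3) * hsq 3 1 - hfsymm 3 1
  · -- case k=3, l=2
    show ⟪(1/2 : ℝ) • ∑ i, ∑ j ∈ Finset.Ioi i, f i j • ν i j, ν 3 2⟫ = f 3 2
    have hv0 : ⟪ν 0 1, ν 3 2⟫ = (0:ℝ) := hb 0 1 3 2 (by decide) (by decide) (by decide) (by decide) (by decide) (by decide)
    have hv1 : ⟪ν 0 2, ν 3 2⟫ = -(1/2) * (s 0 2 * s 3 2) := by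
      rw [hνsymm 0 2, hνsymm 3 2]; exact key_inner ν s hνsymm hνunit hs ha 2 0 3 1 (by decide) (by decide) (by decide) (by decide) (by decide) (by decide)
    have hv2 : ⟪ν 0 3, ν 3 2⟫ = -(1/2) * (s 0 3 * s 2 3) := by
      rw [hνsymm 0 3]; exact key_inner ν s hνsymm hνunit hs ha 3 0 2 1 (by decide) (by decide) (by decide) (by decide) (by decide) (by decide)
    have hv3 : ⟪ν 1 2, ν 3 2⟫ = -(1/2) * (s 1 2 * s 3 2) := by
      rw [hνsymm 1 2, hνsymm 3 2]; exact key_inner ν s hνsymm hνunit hs ha 2 1 3 0 (by decide) (by decide) (by decide) (by decide) (by decide) (by decide)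
    have hv4 : ⟪ν 1 3, ν 3 2⟫ = -(1/2) * (s 1 3 * s 2 3) := by
      rw [hνsymm 1 3]; exact key_inner ν s hνsymm hνunit hs ha 3 1 2 0 (by decide) (by decide) (by decide) (by decide) (by decide) (by decide)
    have hv5 : ⟪ν 2 3, ν 3 2⟫ = (1:ℝ) := by
      rw [hνsymm 3 2]; exact hone 2 3 (by decide)
    rw [hIP, hv0, hv1, hv2, hv3, hv4, hv5]
    linear_combination (-(1/4) * s 2 3) * hc3 + (-(1/4) * s 3 2) * hc2 + (1/4) * (f 2 3) * hsq 2 3 + (1/4) * (f 2 3) * hsq 3 2 - hfsymm 3 2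
  · exact absurd rfl hkl
end

section
/- Let μ be a Borel measure on ℝ³, let p₀ ∈ ℝ³, and suppose there is a constant C > 0 such that μ(B_r(p₀)) ≤ C·r² for every r > 0 (quadratic area growth). Then for every positive integer n, ∫_{B_{eⁿ}(p₀) \ B₁(p₀)} 1/(n²·‖x - p₀‖²) dμ(x) ≤ C·e²/n. In particular this quantity tends to 0 as n → ∞. -/
open MeasureTheory ENNReal

theorem log_cutoff_key
    (μ : Measure (EuclideanSpace ℝ (Fin 3)))
    (p₀ : EuclideanSpace ℝ (Fin 3)) (C : ℝ) (hC : 0 < C)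
    (hμ : ∀ r : ℝ, 0 < r → μ (Metric.ball p₀ r) ≤ ENNReal.ofReal (C * r ^ 2)) :
    ∀ n : ℕ, 0 < n →
      ∫⁻ x in Metric.ball p₀ (Real.exp n) \ Metric.ball p₀ 1,
          ENNReal.ofReal (1 / ((n : ℝ) ^ 2 * ‖x - p₀‖ ^ 2)) ∂μ
        ≤ ENNReal.ofReal (C * Real.exp 2 / n) := by
  intro n hn
  set A : ℕ → Set (EuclideanSpace ℝ (Fin 3)) :=
    fun k => Metric.ball p₀ (Real.exp (k + 1)) \ Metric.ball p₀ (Real.exp k) with hA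
  have hnR : (0 : ℝ) < n := by exact_mod_cast hn
  -- covering
  have hcover : Metric.ball p₀ (Real.exp n) \ Metric.ball p₀ 1 ⊆ ⋃ k : Fin n, A k := by
    intro x hx
    obtain ⟨hx1, hx2⟩ := hx
    rw [Metric.mem_ball] at hx1
    rw [Metric.mem_ball, not_lt] at hx2
    have hd0 : 0 < dist x p₀ := lt_of_lt_of_le one_pos hx2
    have hlog0 : 0 ≤ Real.log (dist x p₀) := Real.log_nonneg hx2
    set k : ℕ := ⌊Real.log (dist x p₀)⌋₊ with hk
    have hkn : k < n := by
      have : Real.log (dist x p₀) < n := by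
        have := Real.log_lt_log hd0 hx1
        rwa [Real.log_exp] at this
      exact Nat.floor_lt hlog0 |>.mpr this
    refine Set.mem_iUnion.mpr ⟨⟨k, hkn⟩, ?_, ?_⟩
    · rw [Metric.mem_ball]
      have : Real.log (dist x p₀) < (k : ℝ) + 1 := Nat.lt_floor_add_one _
      calc dist x p₀ = Real.exp (Real.log (dist x p₀)) := (Real.exp_log hd0).symm
        _ < Real.exp ((k : ℝ) + 1) := Real.exp_lt_exp.mpr this
    · rw [Metric.mem_ball, not_lt]
      have : (k : ℝ) ≤ Real.log (dist x p₀) := Nat.floor_le hlog0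
      calc Real.exp (k : ℝ) ≤ Real.exp (Real.log (dist x p₀)) := Real.exp_le_exp.mpr this
        _ = dist x p₀ := Real.exp_log hd0
  -- per-shell bound
  have hshell : ∀ k : ℕ,
      ∫⁻ x in A k, ENNReal.ofReal (1 / ((n : ℝ) ^ 2 * ‖x - p₀‖ ^ 2)) ∂μ
        ≤ ENNReal.ofReal (C * Real.exp 2 / n ^ 2) := by
    intro k
    have hek : (0 : ℝ) < Real.exp k := Real.exp_pos _
    have hbound : ∀ x ∈ A k,
        ENNReal.ofReal (1 / ((n : ℝ) ^ 2 * ‖x - p₀‖ ^ 2))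
          ≤ ENNReal.ofReal (1 / ((n : ℝ) ^ 2 * Real.exp k ^ 2)) := by
      intro x hx
      apply ENNReal.ofReal_le_ofReal
      have hxd : Real.exp k ≤ ‖x - p₀‖ := by
        have := hx.2
        rw [Metric.mem_ball, not_lt] at this
        rwa [dist_eq_norm] at this
      apply one_div_le_one_div_of_le
      · positivity
      · apply mul_le_mul_of_nonneg_left _ (by positivity)
        exact pow_le_pow_left₀ hek.le hxd 2
    calc ∫⁻ x in A k, ENNReal.ofReal (1 / ((n : ℝ) ^ 2 * ‖x - p₀‖ ^ 2)) ∂μ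
        ≤ ∫⁻ _ in A k, ENNReal.ofReal (1 / ((n : ℝ) ^ 2 * Real.exp k ^ 2)) ∂μ :=
          setLIntegral_mono measurable_const hbound
      _ = ENNReal.ofReal (1 / ((n : ℝ) ^ 2 * Real.exp k ^ 2)) * μ (A k) := by
          rw [setLIntegral_const]
      _ ≤ ENNReal.ofReal (1 / ((n : ℝ) ^ 2 * Real.exp k ^ 2)) *
            ENNReal.ofReal (C * Real.exp (k + 1) ^ 2) := by
          apply mul_le_mul_right
          calc μ (A k) ≤ μ (Metric.ball p₀ (Real.exp (k + 1))) :=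
                measure_mono Set.diff_subset
            _ ≤ ENNReal.ofReal (C * Real.exp (k + 1) ^ 2) := hμ _ (Real.exp_pos _)
      _ = ENNReal.ofReal (C * Real.exp 2 / n ^ 2) := by
          rw [← ENNReal.ofReal_mul (by positivity)]
          congr 1
          have h1 : Real.exp ((k : ℝ) + 1) = Real.exp k * Real.exp 1 := by
            rw [← Real.exp_add]
          have h2 : Real.exp 1 ^ 2 = Real.exp 2 := by
            rw [← Real.exp_nat_mul]; norm_num
          have h3 : (Real.exp (k:ℝ) * Real.exp 1) ^ 2 = Real.exp (k:ℝ) ^ 2 * Real.exp 2 := by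
            rw [mul_pow, h2]
          rw [h1, h3]
          field_simp
  calc ∫⁻ x in Metric.ball p₀ (Real.exp n) \ Metric.ball p₀ 1,
        ENNReal.ofReal (1 / ((n : ℝ) ^ 2 * ‖x - p₀‖ ^ 2)) ∂μ
      ≤ ∫⁻ x in ⋃ k : Fin n, A k,
        ENNReal.ofReal (1 / ((n : ℝ) ^ 2 * ‖x - p₀‖ ^ 2)) ∂μ :=
        lintegral_mono_set hcover
    _ ≤ ∑' (k : Fin n), ∫⁻ x in A k,
        ENNReal.ofReal (1 / ((n : ℝ) ^ 2 * ‖x - p₀‖ ^ 2)) ∂μ :=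
        lintegral_iUnion_le _ _
    _ ≤ ∑' (k : Fin n), ENNReal.ofReal (C * Real.exp 2 / n ^ 2) :=
        ENNReal.tsum_le_tsum fun k => hshell k
    _ = (n : ℝ≥0∞) * ENNReal.ofReal (C * Real.exp 2 / n ^ 2) := by
        rw [tsum_fintype]
        simp [Finset.sum_const, nsmul_eq_mul]
    _ = ENNReal.ofReal (C * Real.exp 2 / n) := by
        rw [← ENNReal.ofReal_natCast n, ← ENNReal.ofReal_mul (by positivity)]
        congr 1
        field_simp

/-- Logarithmic cutoff estimate: if a Borel measure `μ` on `ℝ³` has quadratic area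
growth `μ(B_r(p₀)) ≤ C r²`, then for every positive integer `n`,
`∫_{B_{eⁿ}(p₀) \ B₁(p₀)} 1/(n² ‖x - p₀‖²) dμ ≤ C e² / n`; in particular this
quantity tends to `0` as `n → ∞`. -/
theorem log_cutoff_estimate
    (μ : Measure (EuclideanSpace ℝ (Fin 3)))
    (p₀ : EuclideanSpace ℝ (Fin 3)) (C : ℝ) (hC : 0 < C)
    (hμ : ∀ r : ℝ, 0 < r → μ (Metric.ball p₀ r) ≤ ENNReal.ofReal (C * r ^ 2)) :
    (∀ n : ℕ, 0 < n →
      ∫⁻ x in Metric.ball p₀ (Real.exp n) \ Metric.ball p₀ 1,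
          ENNReal.ofReal (1 / ((n : ℝ) ^ 2 * ‖x - p₀‖ ^ 2)) ∂μ
        ≤ ENNReal.ofReal (C * Real.exp 2 / n)) ∧
    Filter.Tendsto
      (fun n : ℕ =>
        ∫⁻ x in Metric.ball p₀ (Real.exp n) \ Metric.ball p₀ 1,
          ENNReal.ofReal (1 / ((n : ℝ) ^ 2 * ‖x - p₀‖ ^ 2)) ∂μ)
      Filter.atTop (nhds 0) := by
  have key := log_cutoff_key μ p₀ C hC hμ
  refine ⟨key, ?_⟩
  have h0 : Filter.Tendsto (fun n : ℕ => ENNReal.ofReal (C * Real.exp 2 / n))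
      Filter.atTop (nhds 0) := by
    have := ENNReal.tendsto_ofReal (tendsto_const_div_atTop_nhds_zero_nat (C * Real.exp 2))
    simpa using this
  refine tendsto_of_tendsto_of_tendsto_of_le_of_le' tendsto_const_nhds h0 ?_ ?_
  · exact Filter.Eventually.of_forall fun n => zero_le
  · filter_upwards [Filter.eventually_ge_atTop 1] with n hn
    exact key n hn
end
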